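/- arXiv:math/0602645 — 3 statements merged into one kernel-verified Lean document; each statement's English description precedes it below -/
import Mathlib

section
/- For all positive integers a ≤ b, all integers i with 1 ≤ i ≤ b − a, and all integers k with 1 ≤ k ≤ a, the following binomial sum vanishes: Σ_{j=1}^{b} (−1)^{j−i} · C(a, j−i) · C(b−j, a−k) · C(j−1, k−1) = 0, where C(n,m) denotes the binomial coefficient (with C(n,m)=0 if m<0 or m>n). -/
open Finset fwdDiff

/-- Iterated forward difference of the binomial coefficient function. -/
lemma diff_choose_aux (n r : ℕ) :
    (fwdDiff (1:ℕ))^[n] (fun x : ℕ ↦ (x.choose r : ℤ)) =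
      fun x : ℕ ↦ if n ≤ r then ((x.choose (r - n) : ℤ)) else 0 := by
  rcases le_or_gt n r with h | h
  · have : r = n + (r - n) := by omega
    rw [this, fwdDiff_iter_choose]
    simp [h]
  · have hn : n = (n - r - 1) + 1 + r := by omega
    rw [hn, Function.iterate_add_apply]
    have h1 : (fwdDiff (1:ℕ))^[r] (fun x : ℕ ↦ (x.choose r : ℤ)) = fun _ : ℕ ↦ (1 : ℤ) := by
      simpa using fwdDiff_iter_choose 0 r
    rw [h1, Function.iterate_add_apply, Function.iterate_one, fwdDiff_const]
    have h2 : ∀ m : ℕ, (fwdDiff (1:ℕ))^[m] (fun _ : ℕ ↦ (0 : ℤ)) = fun _ : ℕ ↦ (0 : ℤ) := by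
      intro m
      induction m with
      | zero => rfl
      | succ m ih => rw [Function.iterate_succ_apply, fwdDiff_const, ih]
    rw [h2]
    funext x
    simp [Nat.not_le.mpr h]

/-- Alternating sum of binomial coefficients against a shifted binomial coefficient. -/
lemma sumA (n x r : ℕ) (hnx : n ≤ x) :
    ∑ t ∈ Finset.range (n + 1), (-1 : ℤ) ^ t * n.choose t * ((x - t).choose r : ℤ)
      = if n ≤ r then (((x - n).choose (r - n) : ℤ)) else 0 := by
  have key : ∑ t ∈ Finset.range (n + 1), (-1 : ℤ) ^ t * n.choose t * ((x - t).choose r : ℤ)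
      = (fwdDiff (1:ℕ))^[n] (fun y : ℕ ↦ (y.choose r : ℤ)) (x - n) := by
    rw [fwdDiff_iter_eq_sum_shift]
    conv_rhs => rw [← Finset.sum_range_reflect]
    apply Finset.sum_congr rfl
    intro t ht
    simp only [Finset.mem_range] at ht
    have e0 : n + 1 - 1 - t = n - t := by omega
    rw [e0]
    have h1 : n - (n - t) = t := by omega
    have h2 : x - n + (n - t) • 1 = x - t := by simp only [smul_eq_mul, mul_one]; omega
    rw [h1, h2, Nat.choose_symm (by omega : t ≤ n), zsmul_eq_mul]
    push_cast
    ring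
  rw [key, diff_choose_aux]

/-- The vanishing binomial identity expressing `ψ_{a,b} ∘ φ_{a,b} = 0`:
for `1 ≤ a ≤ b`, `1 ≤ i ≤ b - a`, `1 ≤ k ≤ a`,
`∑_{j=1}^{b} (−1)^{j−i} C(a, j−i) C(b−j, a−k) C(j−1, k−1) = 0`
(terms with `j < i` vanish since `C(a, j−i) = 0` for `j − i < 0`). -/
theorem stmt9 (a b i k : ℕ) (ha : 1 ≤ a) (hab : a ≤ b) (hi : 1 ≤ i)
    (hib : i ≤ b - a) (hk : 1 ≤ k) (hka : k ≤ a) :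
    ∑ j ∈ Finset.Icc 1 b,
      (if i ≤ j then
        (-1 : ℤ) ^ (j - i) * (Nat.choose a (j - i)) * (Nat.choose (b - j) (a - k)) *
          (Nat.choose (j - 1) (k - 1))
      else 0) = 0 := by
  have hia : i + a ≤ b := by omega
  -- Step 1: restrict the summation range to `Icc i (i + a)`.
  have h1 : ∑ j ∈ Finset.Icc 1 b,
      (if i ≤ j then
        (-1 : ℤ) ^ (j - i) * (Nat.choose a (j - i)) * (Nat.choose (b - j) (a - k)) *
          (Nat.choose (j - 1) (k - 1))
      else 0)
      = ∑ j ∈ Finset.Icc i (i + a),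
      (if i ≤ j then
        (-1 : ℤ) ^ (j - i) * (Nat.choose a (j - i)) * (Nat.choose (b - j) (a - k)) *
          (Nat.choose (j - 1) (k - 1))
      else 0) := by
    refine (Finset.sum_subset ?_ ?_).symm
    · intro j hj
      simp only [Finset.mem_Icc] at *
      omega
    · intro j hj hj2
      simp only [Finset.mem_Icc] at hj hj2
      by_cases hij : i ≤ j
      · have hlt : a < j - i := by omega
        simp [hij, Nat.choose_eq_zero_of_lt hlt]
      · simp [hij]
  rw [h1, ← Finset.Ico_add_one_right_eq_Icc, Finset.sum_Ico_eq_sum_range]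
  have h2 : i + a + 1 - i = a + 1 := by omega
  rw [h2]
  -- Step 2: simplify the shifted summand.
  have h3 : ∀ m ∈ Finset.range (a + 1),
      (if i ≤ i + m then
        (-1 : ℤ) ^ (i + m - i) * (Nat.choose a (i + m - i)) *
          (Nat.choose (b - (i + m)) (a - k)) * (Nat.choose (i + m - 1) (k - 1))
      else 0)
      = (-1 : ℤ) ^ m * (Nat.choose a m) * (Nat.choose (b - i - m) (a - k)) *
          (Nat.choose ((i - 1) + m) (k - 1)) := by
    intro m _
    have e1 : i + m - i = m := by omega
    have e2 : b - (i + m) = b - i - m := by omega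
    have e3 : i + m - 1 = (i - 1) + m := by omega
    simp [e1, e2, e3]
  rw [Finset.sum_congr rfl h3]
  -- Step 3: Vandermonde on the last factor.
  have h4 : ∀ m : ℕ, ((Nat.choose ((i - 1) + m) (k - 1) : ℤ))
      = ∑ ij ∈ Finset.HasAntidiagonal.antidiagonal (k - 1),
          ((i - 1).choose ij.1 : ℤ) * (m.choose ij.2 : ℤ) := by
    intro m
    rw [Nat.add_choose_eq]
    push_cast
    rfl
  simp_rw [h4, Finset.mul_sum]
  rw [Finset.sum_comm]
  -- Step 4: each inner sum vanishes.
  apply Finset.sum_eq_zero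
  intro ij hij
  obtain ⟨s, t⟩ := ij
  simp only [Finset.HasAntidiagonal.mem_antidiagonal] at hij
  have ht : t ≤ k - 1 := by omega
  have hta : t ≤ a := by omega
  -- factor out the constant `C(i-1, s)` and rearrange
  have h5 : ∀ m : ℕ,
      (-1 : ℤ) ^ m * (Nat.choose a m) * (Nat.choose (b - i - m) (a - k)) *
        (((i - 1).choose s : ℤ) * (m.choose t : ℤ))
      = ((i - 1).choose s : ℤ) *
          ((-1 : ℤ) ^ m * ((Nat.choose a m : ℤ) * (m.choose t : ℤ)) *
            (Nat.choose (b - i - m) (a - k))) := by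
    intro m; ring
  simp_rw [h5, ← Finset.mul_sum]
  rw [mul_eq_zero]
  right
  -- split off the initial zero terms `m < t`
  rw [Finset.range_eq_Ico, ← Finset.sum_Ico_consecutive _ (Nat.zero_le t) (by omega : t ≤ a + 1)]
  have h6 : ∑ m ∈ Finset.Ico 0 t,
      (-1 : ℤ) ^ m * ((Nat.choose a m : ℤ) * (m.choose t : ℤ)) *
        (Nat.choose (b - i - m) (a - k)) = 0 := by
    apply Finset.sum_eq_zero
    intro m hm
    simp only [Finset.mem_Ico] at hm
    rw [Nat.choose_eq_zero_of_lt hm.2]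
    simp
  rw [h6, zero_add, Finset.sum_Ico_eq_sum_range]
  have h7 : a + 1 - t = (a - t) + 1 := by omega
  rw [h7]
  -- trinomial revision on each term
  have h8 : ∀ u ∈ Finset.range ((a - t) + 1),
      (-1 : ℤ) ^ (t + u) * ((Nat.choose a (t + u) : ℤ) * ((t + u).choose t : ℤ)) *
        (Nat.choose (b - i - (t + u)) (a - k))
      = ((-1 : ℤ) ^ t * (Nat.choose a t : ℤ)) *
          ((-1 : ℤ) ^ u * ((a - t).choose u : ℤ) * (((b - i - t) - u).choose (a - k) : ℤ)) := by
    intro u hu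
    simp only [Finset.mem_range] at hu
    have htu : t + u ≤ a := by omega
    have hrev : (Nat.choose a (t + u)) * ((t + u).choose t) = (Nat.choose a t) * ((a - t).choose u) := by
      have := Nat.choose_mul (n := a) (Nat.le_add_right t u)
      simpa [Nat.add_sub_cancel_left] using this
    have e4 : b - i - (t + u) = (b - i - t) - u := by omega
    rw [e4]
    have : ((Nat.choose a (t + u) : ℤ) * ((t + u).choose t : ℤ))
        = ((Nat.choose a t : ℤ) * ((a - t).choose u : ℤ)) := by
      exact_mod_cast congrArg (Nat.cast : ℕ → ℤ) hrev
    rw [this, pow_add]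
    ring
  rw [Finset.sum_congr rfl h8, ← Finset.mul_sum]
  rw [sumA (a - t) (b - i - t) (a - k) (by omega)]
  have : ¬ (a - t ≤ a - k) := by omega
  simp [this]
end

section
/- Let κ be a field, t₀, t₁ ∈ κ with (t₀,t₁) ≠ (0,0). Let W be the 6-dimensional space κ³ ⊕ (κ³)* with the hyperbolic symmetric form β((v,f),(w,g)) = g(v) + f(w). Let e₁,e₂,e₃ be the standard basis of κ³ and x₁,x₂,x₃ the dual basis. Then the three vectors v₁ = t₀²e₁ + t₀t₁e₂ + t₁²x₃, v₂ = t₀e₃ − t₁x₂, v₃ = t₁x₁ − t₀x₂ are linearly independent and span a totally isotropic 3-dimensional subspace of W, which equals its own annihilator with respect to β. -/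
/-- Fiberwise content of the symmetric case of the lemma on `φ'_{3,6}`: in
`W = κ³ ⊕ (κ³)*` (the dual identified with `κ³` via the dual basis) with the hyperbolic
symmetric form `β((v,f),(w,g)) = g(v) + f(w)`, the vectors
`v₁ = t₀²e₁ + t₀t₁e₂ + t₁²x₃`, `v₂ = t₀e₃ − t₁x₂`, `v₃ = t₁x₁ − t₀x₂` are linearly
independent and span a 3-dimensional totally isotropic subspace equal to its own
annihilator. -/
theorem stmt11 {κ : Type*} [Field κ] (t₀ t₁ : κ) (h : ¬(t₀ = 0 ∧ t₁ = 0)) :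
    let β : ((Fin 3 → κ) × (Fin 3 → κ)) → ((Fin 3 → κ) × (Fin 3 → κ)) → κ :=
      fun p q => (∑ i, q.2 i * p.1 i) + (∑ i, p.2 i * q.1 i)
    let v₁ : (Fin 3 → κ) × (Fin 3 → κ) := (![t₀ ^ 2, t₀ * t₁, 0], ![0, 0, t₁ ^ 2])
    let v₂ : (Fin 3 → κ) × (Fin 3 → κ) := (![0, 0, t₀], ![0, -t₁, 0])
    let v₃ : (Fin 3 → κ) × (Fin 3 → κ) := (![0, 0, 0], ![t₁, -t₀, 0])
    let E : Submodule κ ((Fin 3 → κ) × (Fin 3 → κ)) := Submodule.span κ {v₁, v₂, v₃}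
    LinearIndependent κ ![v₁, v₂, v₃] ∧
    Module.finrank κ E = 3 ∧
    (∀ u ∈ E, ∀ w ∈ E, β u w = 0) ∧
    (∀ x : (Fin 3 → κ) × (Fin 3 → κ), x ∈ E ↔ ∀ e ∈ E, β e x = 0) := by
  intro β v₁ v₂ v₃ E
  have hβ : ∀ u x : (Fin 3 → κ) × (Fin 3 → κ),
      β u x = x.2 0 * u.1 0 + x.2 1 * u.1 1 + x.2 2 * u.1 2
        + (u.2 0 * x.1 0 + u.2 1 * x.1 1 + u.2 2 * x.1 2) := by
    intro u x
    show (∑ i, x.2 i * u.1 i) + (∑ i, u.2 i * x.1 i) = _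
    simp [Fin.sum_univ_three]
  have hsymm : ∀ u w, β u w = β w u := fun u w => add_comm _ _
  have hadd : ∀ u v x : (Fin 3 → κ) × (Fin 3 → κ), β (u + v) x = β u x + β v x := by
    intro u v x
    simp only [hβ, Prod.fst_add, Prod.snd_add, Pi.add_apply]
    ring
  have hsmul : ∀ (c : κ) (u x : (Fin 3 → κ) × (Fin 3 → κ)), β (c • u) x = c * β u x := by
    intro c u x
    simp only [hβ, Prod.smul_fst, Prod.smul_snd, Pi.smul_apply, smul_eq_mul]
    ring
  have h1x : ∀ x : (Fin 3 → κ) × (Fin 3 → κ),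
      β v₁ x = x.2 0 * t₀ ^ 2 + x.2 1 * (t₀ * t₁) + t₁ ^ 2 * x.1 2 := by
    intro x; rw [hβ]; simp [v₁]
  have h2x : ∀ x : (Fin 3 → κ) × (Fin 3 → κ),
      β v₂ x = x.2 2 * t₀ - t₁ * x.1 1 := by
    intro x; rw [hβ]; simp [v₂]; ring
  have h3x : ∀ x : (Fin 3 → κ) × (Fin 3 → κ),
      β v₃ x = t₁ * x.1 0 - t₀ * x.1 1 := by
    intro x; rw [hβ]; simp [v₃]; ring
  have hx3 : ∀ x : (Fin 3 → κ) × (Fin 3 → κ),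
      x = (![x.1 0, x.1 1, x.1 2], ![x.2 0, x.2 1, x.2 2]) := by
    intro x
    refine Prod.ext ?_ ?_ <;> funext i <;> fin_cases i <;> rfl
  have key : ∀ x : (Fin 3 → κ) × (Fin 3 → κ),
      x ∈ E ↔ (β v₁ x = 0 ∧ β v₂ x = 0 ∧ β v₃ x = 0) := by
    intro x
    constructor
    · intro hx
      induction hx using Submodule.span_induction with
      | mem y hy =>
        rcases hy with hy | hy | hy <;> subst hy <;>
          refine ⟨?_, ?_, ?_⟩ <;> simp [h1x, h2x, h3x, v₁, v₂, v₃] <;> ring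
      | zero => refine ⟨?_, ?_, ?_⟩ <;> simp [h1x, h2x, h3x]
      | add a b _ _ ha hb =>
        refine ⟨?_, ?_, ?_⟩ <;>
          rw [hsymm, hadd, hsymm a, hsymm b] <;>
          simp [ha.1, ha.2.1, ha.2.2, hb.1, hb.2.1, hb.2.2]
      | smul c a _ ha =>
        refine ⟨?_, ?_, ?_⟩ <;>
          rw [hsymm, hsmul, hsymm a] <;>
          simp [ha.1, ha.2.1, ha.2.2]
    · rintro ⟨k1, k2, k3⟩
      rw [h1x] at k1
      rw [h2x] at k2
      rw [h3x] at k3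
      have m1 : v₁ ∈ E := Submodule.subset_span (by simp)
      have m2 : v₂ ∈ E := Submodule.subset_span (by simp)
      have m3 : v₃ ∈ E := Submodule.subset_span (by simp)
      by_cases ht₀ : t₀ = 0
      · have ht₁ : t₁ ≠ 0 := fun h' => h ⟨ht₀, h'⟩
        subst ht₀
        have hc : x.1 2 = 0 := by simpa [ht₁] using k1
        have hb : x.1 1 = 0 := by simpa [ht₁] using k2
        have ha : x.1 0 = 0 := by simpa [ht₁] using k3
        have hx : x = (x.2 2 / t₁ ^ 2) • v₁ + (-(x.2 1) / t₁) • v₂ + (x.2 0 / t₁) • v₃ := by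
          rw [hx3 x]
          show (_, _) = _
          refine Prod.ext ?_ ?_ <;> funext i <;> fin_cases i
          · simp [v₁, v₂, v₃, ha]
          · simp [v₁, v₂, v₃, hb]
          · simp [v₁, v₂, v₃, hc]
          · simp [v₁, v₂, v₃]; field_simp
          · simp [v₁, v₂, v₃]; field_simp
          · simp [v₁, v₂, v₃]; field_simp
        rw [hx]
        exact add_mem (add_mem (Submodule.smul_mem _ _ m1) (Submodule.smul_mem _ _ m2))
          (Submodule.smul_mem _ _ m3)
      · have hx : x = (x.1 0 / t₀ ^ 2) • v₁ + (x.1 2 / t₀) • v₂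
            + (-(x.2 1 * t₀ + x.1 2 * t₁) / t₀ ^ 2) • v₃ := by
          rw [hx3 x]
          show (_, _) = _
          refine Prod.ext ?_ ?_ <;> funext i <;> fin_cases i
          · simp [v₁, v₂, v₃]; field_simp
          · simp [v₁, v₂, v₃]; field_simp
            linear_combination -k3
          · simp [v₁, v₂, v₃]; field_simp
          · simp [v₁, v₂, v₃]; field_simp
            linear_combination k1
          · simp [v₁, v₂, v₃]; field_simp
            ring
          · simp [v₁, v₂, v₃]; field_simp
            linear_combination t₀ * k2 - t₁ * k3
        rw [hx]
        exact add_mem (add_mem (Submodule.smul_mem _ _ m1) (Submodule.smul_mem _ _ m2))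
          (Submodule.smul_mem _ _ m3)
  have hli : LinearIndependent κ ![v₁, v₂, v₃] := by
    rw [Fintype.linearIndependent_iff]
    intro g hg
    have hf0 := congrFun (congrArg Prod.fst hg) 0
    have hf2 := congrFun (congrArg Prod.fst hg) 2
    have hs0 := congrFun (congrArg Prod.snd hg) 0
    have hs1 := congrFun (congrArg Prod.snd hg) 1
    have hs2 := congrFun (congrArg Prod.snd hg) 2
    simp [Fin.sum_univ_three, v₁, v₂, v₃] at hf0 hf2 hs0 hs1 hs2
    by_cases ht₀ : t₀ = 0
    · have ht₁ : t₁ ≠ 0 := fun h' => h ⟨ht₀, h'⟩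
      subst ht₀
      simp [ht₁] at hf0 hf2 hs0 hs1 hs2
      intro i; fin_cases i
      · exact hs2
      · exact hs1
      · exact hs0
    · have hg0 : g 0 = 0 := hf0.resolve_right ht₀
      have hg1 : g 1 = 0 := hf2.resolve_right ht₀
      have hg2 : g 2 = 0 := by
        rw [hg1] at hs1
        simpa [ht₀] using hs1
      intro i; fin_cases i
      · exact hg0
      · exact hg1
      · exact hg2
  have hiso : ∀ u ∈ E, ∀ w ∈ E, β u w = 0 := by
    intro u hu w hw
    obtain ⟨k1, k2, k3⟩ := (key w).1 hw
    induction hu using Submodule.span_induction with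
    | mem y hy => rcases hy with hy | hy | hy <;> subst hy <;> assumption
    | zero => rw [hsymm, hβ]; simp
    | add a b _ _ ha hb => rw [hadd, ha, hb, add_zero]
    | smul c a _ ha => rw [hsmul, ha, mul_zero]
  refine ⟨hli, ?_, hiso, ?_⟩
  · have hrange : Set.range ![v₁, v₂, v₃] = {v₁, v₂, v₃} := by
      ext y
      constructor
      · rintro ⟨i, rfl⟩; fin_cases i <;> simp
      · rintro (rfl | rfl | rfl)
        exacts [⟨0, rfl⟩, ⟨1, rfl⟩, ⟨2, rfl⟩]
    have hE : E = Submodule.span κ (Set.range ![v₁, v₂, v₃]) := by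
      show Submodule.span κ {v₁, v₂, v₃} = _
      rw [hrange]
    rw [hE, finrank_span_eq_card hli]
    simp
  · intro x
    constructor
    · intro hx e he; exact hiso e he x hx
    · intro hb
      refine (key x).2 ⟨?_, ?_, ?_⟩
      · exact hb v₁ (Submodule.subset_span (by simp))
      · exact hb v₂ (Submodule.subset_span (by simp))
      · exact hb v₃ (Submodule.subset_span (by simp))
end

section
/- Let κ be a field of characteristic not 2, t₀, t₁ ∈ κ with (t₀,t₁) ≠ (0,0). Let W be the 6-dimensional space κ³ ⊕ (κ³)* with the symplectic form β((v,f),(w,g)) = g(v) − f(w). Let e₁,e₂,e₃ be the standard basis of κ³ and x₁,x₂,x₃ the dual basis. Then the vectors v₁ = −t₀²e₁ + t₀t₁(e₂ − x₂) + t₁²x₃, v₂ = t₀(e₂ + x₂) + 2t₁x₁, v₃ = t₁(e₂ + x₂) + 2t₀e₃ are linearly independent and span a totally isotropic 3-dimensional subspace of W, which equals its own annihilator with respect to β. -/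
set_option maxHeartbeats 1000000 in
/-- Fiberwise content of the skew-symmetric case of the lemma on `φ'_{3,6}`: in
`W = κ³ ⊕ (κ³)*` (the dual identified with `κ³` via the dual basis) with the symplectic
form `β((v,f),(w,g)) = g(v) − f(w)`, char κ ≠ 2, the vectors
`v₁ = −t₀²e₁ + t₀t₁(e₂ − x₂) + t₁²x₃`, `v₂ = t₀(e₂ + x₂) + 2t₁x₁`,
`v₃ = t₁(e₂ + x₂) + 2t₀e₃` are linearly independent and span a 3-dimensional totally
isotropic subspace equal to its own annihilator. -/
theorem stmt12 {κ : Type*} [Field κ] (h2 : (2 : κ) ≠ 0) (t₀ t₁ : κ)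
    (h : ¬(t₀ = 0 ∧ t₁ = 0)) :
    let β : ((Fin 3 → κ) × (Fin 3 → κ)) → ((Fin 3 → κ) × (Fin 3 → κ)) → κ :=
      fun p q => (∑ i, q.2 i * p.1 i) - (∑ i, p.2 i * q.1 i)
    let v₁ : (Fin 3 → κ) × (Fin 3 → κ) :=
      (![-t₀ ^ 2, t₀ * t₁, 0], ![0, -(t₀ * t₁), t₁ ^ 2])
    let v₂ : (Fin 3 → κ) × (Fin 3 → κ) := (![0, t₀, 0], ![2 * t₁, t₀, 0])
    let v₃ : (Fin 3 → κ) × (Fin 3 → κ) := (![0, t₁, 2 * t₀], ![0, t₁, 0])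
    let E : Submodule κ ((Fin 3 → κ) × (Fin 3 → κ)) := Submodule.span κ {v₁, v₂, v₃}
    LinearIndependent κ ![v₁, v₂, v₃] ∧
    Module.finrank κ E = 3 ∧
    (∀ u ∈ E, ∀ w ∈ E, β u w = 0) ∧
    (∀ x : (Fin 3 → κ) × (Fin 3 → κ), x ∈ E ↔ ∀ e ∈ E, β e x = 0) := by
  intro β v₁ v₂ v₃ E
  have ht : t₀ ≠ 0 ∨ t₁ ≠ 0 := by tauto
  have hrange : Set.range ![v₁, v₂, v₃] = {v₁, v₂, v₃} := by
    ext x; simp [Fin.exists_fin_succ]; tauto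
  have hli : LinearIndependent κ ![v₁, v₂, v₃] := by
    rw [Fintype.linearIndependent_iff]
    intro g hg
    have h1 := congrFun (congrArg Prod.fst hg)
    have h2' := congrFun (congrArg Prod.snd hg)
    have e10 := h1 0; have e11 := h1 1; have e12 := h1 2
    have e20 := h2' 0; have e22 := h2' 2
    simp [Fin.sum_univ_three, v₁, v₂, v₃] at e10 e11 e12 e20 e22
    have ha : g 0 = 0 := by
      rcases ht with ht | ht
      · exact e10.resolve_right ht
      · exact e22.resolve_right ht
    have hb : g 1 = 0 ∧ g 2 = 0 := by
      rcases ht with ht | ht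
      · have hc : g 2 = 0 := e12.resolve_right (by rintro (h' | h'); exacts [h2 h', ht h'])
        refine ⟨?_, hc⟩
        have : g 1 * t₀ = 0 := by linear_combination e11 - t₀ * t₁ * ha - t₁ * hc
        exact (mul_eq_zero.1 this).resolve_right ht
      · have hbb : g 1 = 0 := e20.resolve_right (by rintro (h' | h'); exacts [h2 h', ht h'])
        refine ⟨hbb, ?_⟩
        have : g 2 * t₁ = 0 := by linear_combination e11 - t₀ * t₁ * ha - t₀ * hbb
        exact (mul_eq_zero.1 this).resolve_right ht
    intro i
    fin_cases i
    · exact ha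
    · exact hb.1
    · exact hb.2
  refine ⟨hli, ?_, ?_, ?_⟩
  · have := finrank_span_eq_card (R := κ) hli
    rw [hrange] at this
    simpa [E] using this
  · intro u hu w hw
    rw [show E = Submodule.span κ (Set.range ![v₁, v₂, v₃]) by rw [hrange]] at hu hw
    rw [Submodule.mem_span_range_iff_exists_fun] at hu hw
    obtain ⟨a, ha⟩ := hu
    obtain ⟨b, hb⟩ := hw
    subst ha hb
    simp [β, v₁, v₂, v₃, Fin.sum_univ_three]
    ring
  · intro x
    constructor
    · intro hx e he
      rw [show E = Submodule.span κ (Set.range ![v₁, v₂, v₃]) by rw [hrange]] at hx he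
      rw [Submodule.mem_span_range_iff_exists_fun] at hx he
      obtain ⟨a, ha⟩ := hx
      obtain ⟨b, hb⟩ := he
      subst ha hb
      simp [β, v₁, v₂, v₃, Fin.sum_univ_three]
      ring
    · intro hx
      have e1 := hx v₁ (Submodule.subset_span (by simp))
      have e2 := hx v₂ (Submodule.subset_span (by simp))
      have e3 := hx v₃ (Submodule.subset_span (by simp))
      simp [β, v₁, v₂, v₃, Fin.sum_univ_three] at e1 e2 e3
      have key : x.2 2 * t₀ ^ 2 = -(x.1 0 * t₁ ^ 2) :=
        mul_left_cancel₀ h2 (by linear_combination t₀ * e3 - t₁ * e2)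
      rw [show E = Submodule.span κ (Set.range ![v₁, v₂, v₃]) by rw [hrange]]
      rw [Submodule.mem_span_range_iff_exists_fun]
      rcases ht with ht | ht
      · refine ⟨![-(x.1 0) / t₀ ^ 2,
          (2 * x.1 1 * t₀ + 2 * x.1 0 * t₁ - x.1 2 * t₁) / (2 * t₀ ^ 2),
          x.1 2 / (2 * t₀)], ?_⟩
        refine Prod.ext ?_ ?_ <;> funext j <;> fin_cases j <;>
            simp [v₁, v₂, v₃, Fin.sum_univ_three] <;> field_simp [ht, h2] <;>
          first
            | ring1
            | linear_combination 2 * e1 - 2 * t₁ * e2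
            | linear_combination (-4 * t₀ ^ 4) * e2
            | linear_combination e1 - t₁ * e2
            | linear_combination (-2 : κ) * e2
            | linear_combination (-1 : κ) * key
      · refine ⟨![x.2 2 / t₁ ^ 2,
          x.2 0 / (2 * t₁),
          (2 * x.1 1 * t₁ - 2 * x.2 2 * t₀ - x.2 0 * t₀) / (2 * t₁ ^ 2)], ?_⟩
        refine Prod.ext ?_ ?_ <;> funext j <;> fin_cases j <;>
            simp [v₁, v₂, v₃, Fin.sum_univ_three] <;> field_simp [ht, h2] <;>
          first
            | ring1
            | linear_combination 2 * e1 - 2 * t₀ * e3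
            | linear_combination (-4 * t₁ ^ 4) * e3
            | linear_combination e1 - t₀ * e3
            | linear_combination (-2 : κ) * e3
            | linear_combination (-1 : κ) * key
end
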